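/- The loading L(G) of an incidence hypergraph G embeds into G̃: there is a unique monomorphism ψ : L(G) → G̃ with ψ ∘ j_G = η_G, and its image is the unique minimal injective subhypergraph of G̃ containing the image of G under η_G. -/

import Mathlib

open CategoryTheory Limits

/-- An incidence hypergraph: vertices, edges, incidences, and two structure maps. -/
structure IncHG : Type 1 where
  V : Type
  E : Type
  I : Type
  vmap : I → V
  emap : I → E

/-- A homomorphism of incidence hypergraphs. -/
@[ext]
structure IncHG.Hom (G H : IncHG) where
  fV : G.V → H.V
  fE : G.E → H.E
  fI : G.I → H.I
  comm_v : ∀ i, H.vmap (fI i) = fV (G.vmap i)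
  comm_e : ∀ i, H.emap (fI i) = fE (G.emap i)

instance : Category IncHG where
  Hom := IncHG.Hom
  id G := ⟨id, id, id, fun _ => rfl, fun _ => rfl⟩
  comp f g := ⟨g.fV ∘ f.fV, g.fE ∘ f.fE, g.fI ∘ f.fI,
    fun i => by simp [IncHG.Hom.comm_v], fun i => by simp [IncHG.Hom.comm_e]⟩
  id_comp f := rfl
  comp_id f := rfl
  assoc f g h := rfl

/-- The extension `G̃` of `G`. -/
def tildeIH (G : IncHG) : IncHG where
  V := Option G.V
  E := Option G.E
  I := G.I ⊕ (Option G.V × Option G.E)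
  vmap := fun a => match a with | .inl i => some (G.vmap i) | .inr p => p.1
  emap := fun a => match a with | .inl i => some (G.emap i) | .inr p => p.2

/-- The canonical inclusion `η_G : G ⟶ G̃`. -/
def etaIH (G : IncHG) : G ⟶ tildeIH G :=
  ⟨some, some, Sum.inl, fun _ => rfl, fun _ => rfl⟩

/-- Vertex set of the loading. -/
def loadV (G : IncHG) : Type := G.V ⊕ PLift (IsEmpty G.V)

/-- Edge set of the loading. -/
def loadE (G : IncHG) : Type := G.E ⊕ PLift (IsEmpty G.E)

/-- The loading `L(G)`. -/
def loadIH (G : IncHG) : IncHG where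
  V := loadV G
  E := loadE G
  I := G.I ⊕ {p : loadV G × loadE G //
        ¬ ∃ i : G.I, Sum.inl (G.vmap i) = p.1 ∧ Sum.inl (G.emap i) = p.2}
  vmap := fun a => match a with | .inl i => .inl (G.vmap i) | .inr p => p.1.1
  emap := fun a => match a with | .inl i => .inl (G.emap i) | .inr p => p.1.2

/-- The canonical inclusion `j_G : G ⟶ L(G)`. -/
def jIH (G : IncHG) : G ⟶ loadIH G :=
  ⟨Sum.inl, Sum.inl, Sum.inl, fun _ => rfl, fun _ => rfl⟩

/-- A subhypergraph of `G`. -/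
structure IncHG.Sub (G : IncHG) where
  V' : Set G.V
  E' : Set G.E
  I' : Set G.I
  closed_v : ∀ i ∈ I', G.vmap i ∈ V'
  closed_e : ∀ i ∈ I', G.emap i ∈ E'

/-- A subhypergraph is injective when it has a vertex, an edge, and an incidence
between each of its vertex-edge pairs. -/
def IncHG.Sub.Inj {G : IncHG} (K : IncHG.Sub G) : Prop :=
  K.V'.Nonempty ∧ K.E'.Nonempty ∧
    ∀ v ∈ K.V', ∀ e ∈ K.E', ∃ i ∈ K.I', G.vmap i = v ∧ G.emap i = e

/-- The image subhypergraph of a morphism. -/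
def imSub {A B : IncHG} (ψ : A ⟶ B) : IncHG.Sub B where
  V' := Set.range (IncHG.Hom.fV ψ)
  E' := Set.range (IncHG.Hom.fE ψ)
  I' := Set.range (IncHG.Hom.fI ψ)
  closed_v := by rintro i ⟨j, rfl⟩; exact ⟨A.vmap j, (IncHG.Hom.comm_v ψ j).symm⟩
  closed_e := by rintro i ⟨j, rfl⟩; exact ⟨A.emap j, (IncHG.Hom.comm_e ψ j).symm⟩


/-- Vertex component of the canonical embedding. -/
def psiV (G : IncHG) : loadV G → Option G.V := fun a =>
  match a with | .inl v => some v | .inr _ => none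

/-- Edge component of the canonical embedding. -/
def psiE (G : IncHG) : loadE G → Option G.E := fun a =>
  match a with | .inl e => some e | .inr _ => none

/-- The canonical embedding `ψ : L(G) ⟶ G̃`. -/
def psiIH (G : IncHG) : loadIH G ⟶ tildeIH G where
  fV := psiV G
  fE := psiE G
  fI := fun a => match a with
    | .inl i => .inl i
    | .inr p => .inr (psiV G p.1.1, psiE G p.1.2)
  comm_v := by rintro (i | p) <;> rfl
  comm_e := by rintro (i | p) <;> rfl

lemma psiV_injective (G : IncHG) : Function.Injective (psiV G) := by
  rintro (v | t) (w | s) h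
  · simp [psiV] at h; exact congrArg Sum.inl h
  · exact (s.down.false v).elim
  · exact (t.down.false w).elim
  · cases t; cases s; rfl
lemma psiE_injective (G : IncHG) : Function.Injective (psiE G) := by
  rintro (v | t) (w | s) h
  · simp [psiE] at h; exact congrArg Sum.inl h
  · exact (s.down.false v).elim
  · exact (t.down.false w).elim
  · cases t; cases s; rfl

lemma psiI_injective (G : IncHG) : Function.Injective ((psiIH G).fI) := by
  rintro (i | p) (j | q) h
  · exact congrArg Sum.inl (Sum.inl_injective h)
  · exact absurd h Sum.inl_ne_inr
  · exact absurd h Sum.inr_ne_inl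
  · have h' := Sum.inr_injective h
    have h1 : psiV G p.1.1 = psiV G q.1.1 := congrArg Prod.fst h'
    have h2 : psiE G p.1.2 = psiE G q.1.2 := congrArg Prod.snd h'
    exact congrArg Sum.inr (Subtype.ext (Prod.ext (psiV_injective G h1) (psiE_injective G h2)))

lemma psi_comm (G : IncHG) : jIH G ≫ psiIH G = etaIH G := rfl

lemma psi_uniq (G : IncHG) (ψ : loadIH G ⟶ tildeIH G) (h : jIH G ≫ ψ = etaIH G) :
    ψ = psiIH G := by
  have hV : ∀ v : G.V, ψ.fV (Sum.inl v) = some v := fun v =>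
    congrFun (congrArg IncHG.Hom.fV h) v
  have hE : ∀ e : G.E, ψ.fE (Sum.inl e) = some e := fun e =>
    congrFun (congrArg IncHG.Hom.fE h) e
  have hI : ∀ i : G.I, ψ.fI (Sum.inl i) = Sum.inl i := fun i =>
    congrFun (congrArg IncHG.Hom.fI h) i
  have hVfun : ψ.fV = psiV G := by
    funext a
    match a with
    | .inl v => exact hV v
    | .inr t =>
      cases hx : ψ.fV (Sum.inr t) with
      | none => rfl
      | some v => exact (t.down.false v).elim
  have hEfun : ψ.fE = psiE G := by
    funext a
    match a with
    | .inl e => exact hE e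
    | .inr t =>
      cases hx : ψ.fE (Sum.inr t) with
      | none => rfl
      | some e => exact (t.down.false e).elim
  refine IncHG.Hom.ext hVfun hEfun ?_
  funext a
  match a with
  | .inl i => exact hI i
  | .inr ⟨p, hp⟩ =>
    have hv : (tildeIH G).vmap (ψ.fI (Sum.inr ⟨p, hp⟩)) = psiV G p.1 := by
      exact (ψ.comm_v _).trans (congrFun hVfun _)
    have he : (tildeIH G).emap (ψ.fI (Sum.inr ⟨p, hp⟩)) = psiE G p.2 := by
      exact (ψ.comm_e _).trans (congrFun hEfun _)
    cases hx : ψ.fI (Sum.inr ⟨p, hp⟩) with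
    | inl j =>
      rw [hx] at hv he
      exfalso
      apply hp
      refine ⟨j, ?_, ?_⟩
      · cases hp1 : p.1 with
        | inl v =>
          rw [hp1] at hv
          simp [tildeIH, psiV] at hv
          rw [hv, ← hp1]
        | inr t => exact (t.down.false (G.vmap j)).elim
      · cases hp2 : p.2 with
        | inl e =>
          rw [hp2] at he
          simp [tildeIH, psiE] at he
          rw [he, ← hp2]
        | inr t => exact (t.down.false (G.emap j)).elim
    | inr q =>
      rw [hx] at hv he
      show _ = Sum.inr (psiV G p.1, psiE G p.2)
      exact congrArg Sum.inr (Prod.ext hv he)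

lemma psi_mono (G : IncHG) : Mono (psiIH G) := by
  constructor
  intro Z f g h
  refine IncHG.Hom.ext ?_ ?_ ?_
  · funext z
    exact psiV_injective G (congrFun (congrArg IncHG.Hom.fV h) z)
  · funext z
    exact psiE_injective G (congrFun (congrArg IncHG.Hom.fE h) z)
  · funext z
    exact psiI_injective G (congrFun (congrArg IncHG.Hom.fI h) z)

/-- There is a unique monomorphism `ψ : L(G) ⟶ G̃` with `j_G ≫ ψ = η_G`, and the image
of any such `ψ` is the least injective subhypergraph of `G̃` containing the image of `G`
under `η_G`. -/
theorem loadIH_embeds_in_tildeIH (G : IncHG) :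
    (∃! ψ : loadIH G ⟶ tildeIH G, Mono ψ ∧ jIH G ≫ ψ = etaIH G) ∧
    ∀ ψ : loadIH G ⟶ tildeIH G, Mono ψ → jIH G ≫ ψ = etaIH G →
      (imSub ψ).Inj ∧
      (imSub (etaIH G)).V' ⊆ (imSub ψ).V' ∧
      (imSub (etaIH G)).E' ⊆ (imSub ψ).E' ∧
      (imSub (etaIH G)).I' ⊆ (imSub ψ).I' ∧
      ∀ K : IncHG.Sub (tildeIH G), K.Inj →
        (imSub (etaIH G)).V' ⊆ K.V' → (imSub (etaIH G)).E' ⊆ K.E' →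
        (imSub (etaIH G)).I' ⊆ K.I' →
        (imSub ψ).V' ⊆ K.V' ∧ (imSub ψ).E' ⊆ K.E' ∧ (imSub ψ).I' ⊆ K.I' := by
  constructor
  · exact ⟨psiIH G, ⟨psi_mono G, psi_comm G⟩, fun ψ hψ => psi_uniq G ψ hψ.2⟩
  · intro ψ hm hc
    obtain rfl := psi_uniq G ψ hc
    refine ⟨?_, ?_, ?_, ?_, ?_⟩
    · refine ⟨?_, ?_, ?_⟩
      · by_cases h : Nonempty G.V
        · exact ⟨some h.some, ⟨Sum.inl h.some, rfl⟩⟩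
        · exact ⟨none, ⟨Sum.inr ⟨not_nonempty_iff.mp h⟩, rfl⟩⟩
      · by_cases h : Nonempty G.E
        · exact ⟨some h.some, ⟨Sum.inl h.some, rfl⟩⟩
        · exact ⟨none, ⟨Sum.inr ⟨not_nonempty_iff.mp h⟩, rfl⟩⟩
      · rintro v ⟨a, rfl⟩ e ⟨b, rfl⟩
        by_cases hex : ∃ i : G.I, Sum.inl (G.vmap i) = a ∧ Sum.inl (G.emap i) = b
        · obtain ⟨i, h1, h2⟩ := hex
          refine ⟨Sum.inl i, ⟨Sum.inl i, rfl⟩, ?_, ?_⟩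
          · show some (G.vmap i) = psiV G a
            rw [← h1]; rfl
          · show some (G.emap i) = psiE G b
            rw [← h2]; rfl
        · exact ⟨Sum.inr (psiV G a, psiE G b),
            ⟨Sum.inr ⟨(a, b), hex⟩, rfl⟩, rfl, rfl⟩
    · rintro v ⟨w, rfl⟩; exact ⟨Sum.inl w, rfl⟩
    · rintro e ⟨w, rfl⟩; exact ⟨Sum.inl w, rfl⟩
    · rintro i ⟨w, rfl⟩; exact ⟨Sum.inl w, rfl⟩
    · intro K hK hV hE hI
      obtain ⟨⟨v0, hv0⟩, ⟨e0, he0⟩, hInc⟩ := hK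
      have hVK : ∀ a : loadV G, psiV G a ∈ K.V' := by
        rintro (v | t)
        · exact hV ⟨v, rfl⟩
        · have : v0 = none := by
            cases v0 with
            | none => rfl
            | some v => exact (t.down.false v).elim
          rw [this] at hv0; exact hv0
      have hEK : ∀ b : loadE G, psiE G b ∈ K.E' := by
        rintro (e | t)
        · exact hE ⟨e, rfl⟩
        · have : e0 = none := by
            cases e0 with
            | none => rfl
            | some e => exact (t.down.false e).elim
          rw [this] at he0; exact he0
      refine ⟨?_, ?_, ?_⟩
      · rintro v ⟨a, rfl⟩; exact hVK a
      · rintro e ⟨b, rfl⟩; exact hEK b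
      · rintro i ⟨w, rfl⟩
        match w with
        | .inl j => exact hI ⟨j, rfl⟩
        | .inr ⟨p, hp⟩ =>
          obtain ⟨i, hiK, hiv, hie⟩ := hInc (psiV G p.1) (hVK p.1) (psiE G p.2) (hEK p.2)
          have : i = Sum.inr (psiV G p.1, psiE G p.2) := by
            cases i with
            | inl j =>
              exfalso; apply hp
              refine ⟨j, ?_, ?_⟩
              · cases hp1 : p.1 with
                | inl v =>
                  rw [hp1] at hiv
                  simp [tildeIH, psiV] at hiv
                  rw [hiv, ← hp1]
                | inr t => exact (t.down.false (G.vmap j)).elim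
              · cases hp2 : p.2 with
                | inl e =>
                  rw [hp2] at hie
                  simp [tildeIH, psiE] at hie
                  rw [hie, ← hp2]
                | inr t => exact (t.down.false (G.emap j)).elim
            | inr q => exact congrArg Sum.inr (Prod.ext hiv hie)
          show Sum.inr (psiV G p.1, psiE G p.2) ∈ K.I'
          rw [← this]; exact hiK
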